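/- For all nonnegative integers i and k with k + 2 > 2^i, the sum over j from 0 to 2^i - 1 of [C(k,j) * C(k, 2^i - 1 - j) / C(2k, 2^i - 1)] * 1/(2^i - j) is at most 2/2^i. -/

import Mathlib

theorem stmt_2 (i k : ℕ) (h : 2 ^ i < k + 2) :
    ∑ j ∈ Finset.range (2 ^ i),
        ((k.choose j : ℚ) * (k.choose (2 ^ i - 1 - j) : ℚ)
            / ((2 * k).choose (2 ^ i - 1) : ℚ))
          * (1 / ((2 ^ i : ℚ) - (j : ℚ)))
      ≤ 2 / (2 ^ i : ℚ) := by
  set n := 2 ^ i with hn_def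
  have hn : 0 < n := Nat.pow_pos (by norm_num)
  have hcastn : (2 : ℚ) ^ i = (n : ℚ) := by rw [hn_def]; push_cast; ring
  rw [hcastn]
  have hd : 0 < (2 * k).choose (n - 1) := Nat.choose_pos (by omega)
  have hdQ : (0 : ℚ) < ((2 * k).choose (n - 1) : ℚ) := by exact_mod_cast hd
  have hkQ : (0 : ℚ) < ((k : ℚ) + 1) := by positivity
  -- Step A: rewrite each term
  have hterm : ∀ j ∈ Finset.range n,
      ((k.choose j : ℚ) * (k.choose (n - 1 - j) : ℚ) / ((2 * k).choose (n - 1) : ℚ))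
        * (1 / ((n : ℚ) - (j : ℚ)))
      = ((k.choose j * (k + 1).choose (n - j) : ℕ) : ℚ)
          / (((k : ℚ) + 1) * ((2 * k).choose (n - 1) : ℚ)) := by
    intro j hj
    rw [Finset.mem_range] at hj
    have h1 : (k + 1) * k.choose (n - 1 - j) = (n - j) * (k + 1).choose (n - j) := by
      have h2 := Nat.add_one_mul_choose_eq k (n - 1 - j)
      have e : n - 1 - j + 1 = n - j := by omega
      skip
      rw [e] at h2
      rw [h2, Nat.mul_comm]
    have hnj : 0 < n - j := by omega
    have hnjQ : (0 : ℚ) < ((n - j : ℕ) : ℚ) := by exact_mod_cast hnj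
    have hcast : (n : ℚ) - (j : ℚ) = ((n - j : ℕ) : ℚ) := by
      push_cast [Nat.cast_sub hj.le]; ring
    have h1Q : ((k : ℚ) + 1) * (k.choose (n - 1 - j) : ℚ)
        = ((n - j : ℕ) : ℚ) * ((k + 1).choose (n - j) : ℚ) := by exact_mod_cast h1
    rw [hcast]
    push_cast
    field_simp
    linear_combination (k.choose j : ℚ) * h1Q
  rw [Finset.sum_congr rfl hterm, ← Finset.sum_div, ← Nat.cast_sum]
  -- Step B: Vandermonde bound
  have hsum : ∑ j ∈ Finset.range n, k.choose j * (k + 1).choose (n - j)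
      ≤ (2 * k + 1).choose n := by
    have hv : (2 * k + 1).choose n
        = ∑ j ∈ Finset.range (n + 1), k.choose j * (k + 1).choose (n - j) := by
      have h3 := Nat.add_choose_eq k (k + 1) n
      rw [show k + (k + 1) = 2 * k + 1 by ring] at h3
      rw [h3, Finset.Nat.sum_antidiagonal_eq_sum_range_succ_mk]
    rw [hv]
    exact Finset.sum_le_sum_of_subset (Finset.range_subset_range.2 (Nat.le_succ n))
  -- Step C: C(2k+1,n) * n = (2k+1) * C(2k,n-1)
  have hC : (2 * k + 1).choose n * n = (2 * k + 1) * (2 * k).choose (n - 1) := by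
    have h4 := Nat.add_one_mul_choose_eq (2 * k) (n - 1)
    have e : n - 1 + 1 = n := by omega
    skip
    rw [e] at h4
    exact h4.symm
  calc ((∑ j ∈ Finset.range n, k.choose j * (k + 1).choose (n - j) : ℕ) : ℚ)
        / (((k : ℚ) + 1) * ((2 * k).choose (n - 1) : ℚ))
      ≤ (((2 * k + 1).choose n : ℕ) : ℚ)
        / (((k : ℚ) + 1) * ((2 * k).choose (n - 1) : ℚ)) := by
        gcongr

    _ ≤ 2 / (n : ℚ) := by
        rw [div_le_div_iff₀ (by positivity) (by exact_mod_cast hn)]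
        have : ((2 * k + 1).choose n : ℚ) * n = (2 * k + 1) * ((2 * k).choose (n - 1) : ℚ) := by
          exact_mod_cast hC
        nlinarith [hdQ]
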